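/- (End-to-end certification soundness.) Fix k ≥ 1 and let C = (F, Init, P) be a deterministic transition system over input type I and state type S, with I nonempty. If P'_k is 1-inductive in the witness system C'_k (i.e., for every initial state w of C'_k and every input i, P'_k i w holds; and for every witness state w and all inputs i0, i1, P'_k i0 w implies P'_k i1 (F'_k i0 w)), then C is safe: every initialized trace of C satisfies P (x n) (s n) for all n. -/
import Mathlib


/-- A (deterministic) trace: `s (n+1) = F (x n) (s n)` for all `n`. -/
def IsTrace {I S : Type*} (F : I → S → S) (x : ℕ → I) (s : ℕ → S) : Prop :=
  ∀ n, s (n + 1) = F (x n) (s n)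

/-- The system `(F, Init, P)` is safe: every initialized trace satisfies the property. -/
def Safe {I S : Type*} (F : I → S → S) (Init : Set S) (P : I → S → Prop) : Prop :=
  ∀ x s, IsTrace F x s → s 0 ∈ Init → ∀ n, P (x n) (s n)

/-- `P` is `k`-inductive in `(F, Init, P)`: BMC of depth `k-1` and consecution of depth `k`. -/
def KInductive {I S : Type*} (k : ℕ) (F : I → S → S) (Init : Set S) (P : I → S → Prop) :
    Prop :=
  (∀ x s, IsTrace F x s → s 0 ∈ Init → ∀ n < k, P (x n) (s n)) ∧
  (∀ x s, IsTrace F x s → (∀ n < k, P (x n) (s n)) → P (x k) (s k))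

/-- The state type of the witness system: `k` copies of the latches,
`k-1` copies of the inputs, and `k` initialization bits. -/
abbrev WState (k : ℕ) (I S : Type*) : Type _ :=
  (Fin k → S) × (Fin (k - 1) → I) × (Fin k → Bool)

/-- The transition function of the witness system. -/
def WTrans {I S : Type*} (k : ℕ) (F : I → S → S) (i : I) (w : WState k I S) :
    WState k I S :=
  ⟨fun j => if _h : (j : ℕ) = k - 1 then F i (w.1 j) else w.1 ⟨(j : ℕ) + 1, by omega⟩,
   fun j => if _h : (j : ℕ) = k - 2 then i else w.2.1 ⟨(j : ℕ) + 1, by omega⟩,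
   fun j => if _h : (j : ℕ) = k - 1 then w.2.2 j else w.2.2 ⟨(j : ℕ) + 1, by omega⟩⟩

/-- The initial states of the witness system. -/
def WInit (k : ℕ) (hk : 0 < k) (I : Type*) {S : Type*} (Init : Set S) :
    Set (WState k I S) :=
  {w | w.1 ⟨k - 1, by omega⟩ ∈ Init ∧ w.2.2 ⟨k - 1, by omega⟩ = true ∧
       ∀ j : Fin k, (j : ℕ) < k - 1 → w.2.2 j = false}

/-- The extended input sequence `X`: `X j = x j` for `j < k - 1` and `X (k-1) = i`. -/
def WX {I : Type*} (k : ℕ) (i : I) (x : Fin (k - 1) → I) (j : Fin k) : I :=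
  if h : (j : ℕ) = k - 1 then i else x ⟨(j : ℕ), by omega⟩

/-- The property of the witness system: the conjunction of `p0`–`p4`. -/
def WProp {I S : Type*} (k : ℕ) (hk : 0 < k) (F : I → S → S) (Init : Set S)
    (P : I → S → Prop) (i : I) (w : WState k I S) : Prop :=
  (∀ j : Fin k, ∀ hj : (j : ℕ) < k - 1,
      w.2.2 j = true → w.2.2 ⟨(j : ℕ) + 1, by omega⟩ = true) ∧
  (∀ j : Fin k, ∀ hj : (j : ℕ) < k - 1,
      w.2.2 j = true → w.1 ⟨(j : ℕ) + 1, by omega⟩ = F (WX k i w.2.1 j) (w.1 j)) ∧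
  (∀ j : Fin k, w.2.2 j = true → P (WX k i w.2.1 j) (w.1 j)) ∧
  (∀ j : Fin k, 1 ≤ (j : ℕ) →
      w.2.2 ⟨(j : ℕ) - 1, by omega⟩ = false → w.2.2 j = true → w.1 j ∈ Init) ∧
  (w.2.2 ⟨k - 1, by omega⟩ = true)

/-- End-to-end certification soundness: if `P'_k` is `1`-inductive in the
witness system `C'_k`, then `C` is safe. -/
theorem certification_sound (k : ℕ) (hk : 0 < k) {I S : Type*} [Nonempty I]
    (F : I → S → S) (Init : Set S) (P : I → S → Prop)
    (hbmc' : ∀ w ∈ WInit k hk I Init, ∀ i : I, WProp k hk F Init P i w)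
    (hconsec' : ∀ (w : WState k I S) (i0 i1 : I),
      WProp k hk F Init P i0 w → WProp k hk F Init P i1 (WTrans k F i0 w)) :
    Safe F Init P := by
  intro x s htr hinit n
  set W : ℕ → WState k I S := fun n =>
    (fun j => s (n + (j : ℕ) + 1 - k),
     fun j => x (n + (j : ℕ) + 1 - k),
     fun j => decide (k ≤ n + (j : ℕ) + 1)) with hWdef
  have hstep : ∀ m, W (m + 1) = WTrans k F (x m) (W m) := by
    intro m
    refine Prod.ext ?_ (Prod.ext ?_ ?_)
    · funext j
      show s (m + 1 + (j : ℕ) + 1 - k) = _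
      simp only [WTrans]
      by_cases h : (j : ℕ) = k - 1
      · simp only [dif_pos h]
        have h1 : m + 1 + (j : ℕ) + 1 - k = m + 1 := by omega
        have h2 : m + (j : ℕ) + 1 - k = m := by
          have := j.isLt; omega
        rw [h1]
        show s (m + 1) = F (x m) (s (m + (j : ℕ) + 1 - k))
        rw [h2, htr m]
      · simp only [dif_neg h]
        show s (m + 1 + (j : ℕ) + 1 - k) = s (m + ((j : ℕ) + 1) + 1 - k)
        congr 1
        omega
    · funext j
      show x (m + 1 + (j : ℕ) + 1 - k) = _
      simp only [WTrans]
      by_cases h : (j : ℕ) = k - 2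
      · simp only [dif_pos h]
        have hj := j.isLt
        show x (m + 1 + (j : ℕ) + 1 - k) = x m
        congr 1
        omega
      · simp only [dif_neg h]
        show x (m + 1 + (j : ℕ) + 1 - k) = x (m + ((j : ℕ) + 1) + 1 - k)
        congr 1
        omega
    · funext j
      show decide (k ≤ m + 1 + (j : ℕ) + 1) = _
      simp only [WTrans]
      by_cases h : (j : ℕ) = k - 1
      · simp only [dif_pos h]
        show decide (k ≤ m + 1 + (j : ℕ) + 1) = decide (k ≤ m + (j : ℕ) + 1)
        rw [decide_eq_decide]
        have hj := j.isLt
        constructor <;> intro <;> omega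
      · simp only [dif_neg h]
        show decide (k ≤ m + 1 + (j : ℕ) + 1) = decide (k ≤ m + ((j : ℕ) + 1) + 1)
        rw [decide_eq_decide]
        constructor <;> intro <;> omega
  have hW0 : W 0 ∈ WInit k hk I Init := by
    refine ⟨?_, ?_, ?_⟩
    · show s (0 + (k - 1) + 1 - k) ∈ Init
      have h0 : 0 + (k - 1) + 1 - k = 0 := by omega
      rw [h0]; exact hinit
    · show decide (k ≤ 0 + (k - 1) + 1) = true
      rw [decide_eq_true_iff]; omega
    · intro j hj
      show decide (k ≤ 0 + (j : ℕ) + 1) = false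
      rw [decide_eq_false_iff_not]; omega
  have hWP : ∀ m, ∀ i : I, WProp k hk F Init P i (W m) := by
    intro m
    induction m with
    | zero => exact fun i => hbmc' _ hW0 i
    | succ m ih =>
        intro i
        rw [hstep m]
        exact hconsec' _ (x m) i (ih (x m))
  have hp2 := (hWP n (x n)).2.2.1 ⟨k - 1, by omega⟩ (by
    show decide (k ≤ n + (k - 1) + 1) = true
    rw [decide_eq_true_iff]; omega)
  have hX : WX k (x n) ((W n).2.1) ⟨k - 1, by omega⟩ = x n := by
    unfold WX
    rw [dif_pos rfl]
  rw [hX] at hp2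
  have hl : (W n).1 ⟨k - 1, by omega⟩ = s n := by
    show s (n + (k - 1) + 1 - k) = s n
    congr 1
    omega
  rw [hl] at hp2
  exact hp2
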